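/- arXiv:2403.04276 — 7 statements merged into one kernel-verified Lean document; each statement's English description precedes it below -/
import Mathlib

section
/- Let ℐ be an ideal on ω with pseudounion A, let C = ω \ A, and let σ : A → C be an injection. Define m : ω → ω by m(n) = n if n ∈ C and m(n) = σ(n) if n ∈ A. Then for every K ∈ ℐ, the set {n ∈ ω : m(n) ∈ K} is finite. -/
open Set

def IsIdeal (I : Set (Set ℕ)) : Prop :=
  (∀ A ∈ I, ∀ B ⊆ A, B ∈ I) ∧ (∀ A ∈ I, ∀ B ∈ I, A ∪ B ∈ I) ∧
  (∀ A : Set ℕ, A.Finite → A ∈ I) ∧ Set.univ ∉ I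

def IsPseudounion (I : Set (Set ℕ)) (A : Set ℕ) : Prop :=
  Aᶜ.Infinite ∧ ∀ K ∈ I, (K \ A).Finite

def enl {X : Type*} [PseudoMetricSpace X] (B : Set X) (δ : ℝ) : Set X :=
  ⋃ x ∈ B, Metric.ball x δ

def IsBornology {X : Type*} (𝔅 : Set (Set X)) : Prop :=
  (∀ B ∈ 𝔅, ∀ B' ⊆ B, B' ∈ 𝔅) ∧ (∀ B ∈ 𝔅, ∀ B' ∈ 𝔅, B ∪ B' ∈ 𝔅) ∧
  (∀ x : X, ∃ B ∈ 𝔅, x ∈ B)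

def IsBase {X : Type*} (𝔅 𝔅₀ : Set (Set X)) : Prop :=
  𝔅₀ ⊆ 𝔅 ∧ ∀ B ∈ 𝔅, ∃ B₀ ∈ 𝔅₀, B ⊆ B₀

def HasClosedBase {X : Type*} [PseudoMetricSpace X] (𝔅 : Set (Set X)) : Prop :=
  ∃ 𝔅₀, IsBase 𝔅 𝔅₀ ∧ ∀ B ∈ 𝔅₀, IsClosed B

def IGammaCover {X : Type*} [PseudoMetricSpace X] (𝔅 : Set (Set X))
    (I : Set (Set ℕ)) (U : ℕ → Set X) : Prop :=
  (∀ n, IsOpen (U n)) ∧ (⋃ n, U n) = Set.univ ∧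
  ∀ B ∈ 𝔅, ∃ δ : ℕ → ℝ, (∀ n, 0 < δ n) ∧ {n | ¬ enl B (δ n) ⊆ U n} ∈ I

def GammaCover {X : Type*} [PseudoMetricSpace X] (𝔅 : Set (Set X))
    (U : ℕ → Set X) : Prop :=
  (∀ n, IsOpen (U n)) ∧ (⋃ n, U n) = Set.univ ∧
  ∀ B ∈ 𝔅, ∃ n₀ : ℕ, ∃ δ : ℕ → ℝ, ∀ n ≥ n₀, 0 < δ n ∧ enl B (δ n) ⊆ U n

def OBsCover {X : Type*} [PseudoMetricSpace X] (𝔅 : Set (Set X))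
    (𝒰 : Set (Set X)) : Prop :=
  (∀ U ∈ 𝒰, IsOpen U) ∧ Set.univ ∉ 𝒰 ∧ ⋃₀ 𝒰 = Set.univ ∧
  ∀ B ∈ 𝔅, ∃ U ∈ 𝒰, ∃ δ > 0, enl B δ ⊆ U

def IHurewicz {X : Type*} [PseudoMetricSpace X] (𝔅 : Set (Set X))
    (I : Set (Set ℕ)) : Prop :=
  ∀ 𝒰 : ℕ → Set (Set X), (∀ n, OBsCover 𝔅 (𝒰 n)) →
    ∃ V : ℕ → Set (Set X), (∀ n, V n ⊆ 𝒰 n ∧ (V n).Finite) ∧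
      ∀ B ∈ 𝔅, ∃ δ : ℕ → ℝ, (∀ n, 0 < δ n) ∧
        {n | ∀ U ∈ V n, ¬ enl B (δ n) ⊆ U} ∈ I

def BsHurewicz {X : Type*} [PseudoMetricSpace X] (𝔅 : Set (Set X)) : Prop :=
  ∀ 𝒰 : ℕ → Set (Set X), (∀ n, OBsCover 𝔅 (𝒰 n)) →
    ∃ V : ℕ → Set (Set X), (∀ n, V n ⊆ 𝒰 n ∧ (V n).Finite) ∧
      ∀ B ∈ 𝔅, ∃ n₀ : ℕ, ∃ δ : ℕ → ℝ, ∀ n ≥ n₀, 0 < δ n ∧ ∃ U ∈ V n, enl B (δ n) ⊆ U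

theorem pseudounion_reindex_finite (I : Set (Set ℕ)) (A : Set ℕ)
    (hI : IsIdeal I) (hA : IsPseudounion I A) (σ m : ℕ → ℕ)
    (hσ : ∀ n ∈ A, σ n ∈ Aᶜ) (hinj : Set.InjOn σ A)
    (hm1 : ∀ n ∈ A, m n = σ n) (hm2 : ∀ n ∉ A, m n = n) :
    ∀ K ∈ I, {n : ℕ | m n ∈ K}.Finite := by
  intro K hK
  have hKA : (K \ A).Finite := hA.2 K hK
  have h1 : {n : ℕ | n ∉ A ∧ m n ∈ K}.Finite := by
    apply hKA.subset
    rintro n ⟨hnA, hnK⟩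
    rw [hm2 n hnA] at hnK
    exact ⟨hnK, hnA⟩
  have h2 : {n : ℕ | n ∈ A ∧ m n ∈ K}.Finite := by
    apply Set.Finite.of_finite_image (f := σ) _ (hinj.mono (fun n hn => hn.1))
    apply hKA.subset
    rintro x ⟨n, ⟨hnA, hnK⟩, rfl⟩
    rw [hm1 n hnA] at hnK
    exact ⟨hnK, hσ n hnA⟩
  have : {n : ℕ | m n ∈ K} ⊆ {n : ℕ | n ∈ A ∧ m n ∈ K} ∪ {n : ℕ | n ∉ A ∧ m n ∈ K} := by
    intro n hn
    by_cases h : n ∈ A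
    · exact Or.inl ⟨h, hn⟩
    · exact Or.inr ⟨h, hn⟩
  exact (h2.union h1).subset this
end

section
/- Let 𝔅 be a bornology on a metric space X with closed base, and let ℐ be an ideal on ω having a pseudounion. Then every ℐ-γ_{𝔅ˢ}-cover {U_n : n ∈ ω} of X has a subfamily (obtained by a reindexing n ↦ m_n) which is a γ_{𝔅ˢ}-cover of X. -/
open Set

theorem igamma_subcover_gamma_of_pseudounion {X : Type*} [MetricSpace X]
    (𝔅 : Set (Set X)) (hB : IsBornology 𝔅) (hcb : HasClosedBase 𝔅)
    (I : Set (Set ℕ)) (hI : IsIdeal I) (hpu : ∃ A, IsPseudounion I A)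
    (U : ℕ → Set X) (hU : IGammaCover 𝔅 I U) :
    ∃ m : ℕ → ℕ, GammaCover 𝔅 (fun n => U (m n)) := by
  obtain ⟨A, hAinf, hAps⟩ := hpu
  obtain ⟨hopen, hcov, hγ⟩ := hU
  have hpinf : {n | n ∈ Aᶜ}.Infinite := hAinf
  set m : ℕ → ℕ := Nat.nth (· ∈ Aᶜ) with hm
  have hmem : ∀ n, m n ∉ A := fun n => Nat.nth_mem_of_infinite hpinf n
  have hminj : Function.Injective m := Nat.nth_injective hpinf
  have key : ∀ B ∈ 𝔅, ∃ n₀ : ℕ, ∃ δ : ℕ → ℝ,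
      ∀ n ≥ n₀, 0 < δ n ∧ enl B (δ n) ⊆ U (m n) := by
    intro B hB'
    obtain ⟨δ, hδpos, hK⟩ := hγ B hB'
    have hfin : ({n | ¬ enl B (δ n) ⊆ U n} \ A).Finite := hAps _ hK
    have hSfin : {n | ¬ enl B (δ (m n)) ⊆ U (m n)}.Finite := by
      have : {n | ¬ enl B (δ (m n)) ⊆ U (m n)} ⊆
          m ⁻¹' ({n | ¬ enl B (δ n) ⊆ U n} \ A) := by
        intro n hn
        exact ⟨hn, hmem n⟩
      exact (hfin.preimage (hminj.injOn)).subset this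
    obtain ⟨N, hN⟩ := hSfin.bddAbove
    refine ⟨N + 1, fun n => δ (m n), fun n hn => ⟨hδpos _, ?_⟩⟩
    by_contra h
    exact absurd (hN h) (by omega)
  refine ⟨m, fun n => hopen _, ?_, key⟩
  ext x
  simp only [Set.mem_iUnion, Set.mem_univ, iff_true]
  obtain ⟨B, hB', hxB⟩ := hB.2.2 x
  have hx : {x} ∈ 𝔅 := hB.1 B hB' {x} (Set.singleton_subset_iff.mpr hxB)
  obtain ⟨n₀, δ, hδ⟩ := key {x} hx
  obtain ⟨hpos, hsub⟩ := hδ n₀ le_rfl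
  refine ⟨n₀, hsub ?_⟩
  simp only [enl, Set.mem_singleton_iff, Set.iUnion_iUnion_eq_left]
  exact Metric.mem_ball_self hpos
end

section
/- Let 𝔅 be a bornology on a metric space X with closed base 𝔅₀, and let ℐ, 𝒥 be ideals on ω. Suppose every family 𝒜 ⊆ ℐ with |𝒜| ≤ |𝔅₀| admits a function φ : ω → ω such that φ⁻¹(A) ∈ 𝒥 for all A ∈ 𝒜. Then for every ℐ-γ_{𝔅ˢ}-cover {V_n : n ∈ ω} of X there is φ : ω → ω so that {V_{φ(m)} : m ∈ ω} is a 𝒥-γ_{𝔅ˢ}-cover of X. -/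
open Set

universe u

theorem igamma_to_jgamma_of_card {X : Type u} [MetricSpace X]
    (𝔅 𝔅₀ : Set (Set X)) (hB : IsBornology 𝔅) (hbase : IsBase 𝔅 𝔅₀)
    (hclosed : ∀ B ∈ 𝔅₀, IsClosed B)
    (I J : Set (Set ℕ)) (hI : IsIdeal I) (hJ : IsIdeal J)
    (hcard : ∀ 𝒜 : Set (Set ℕ), 𝒜 ⊆ I → Cardinal.lift.{u} (Cardinal.mk ↥𝒜) ≤ Cardinal.lift.{0} (Cardinal.mk ↥𝔅₀) →
      ∃ φ : ℕ → ℕ, ∀ A ∈ 𝒜, φ ⁻¹' A ∈ J)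
    (V : ℕ → Set X) (hV : IGammaCover 𝔅 I V) :
    ∃ φ : ℕ → ℕ, IGammaCover 𝔅 J (fun m => V (φ m)) := by
  have key : ∀ B₀ : ↥𝔅₀, ∃ δ : ℕ → ℝ, (∀ n, 0 < δ n) ∧
      {n | ¬ enl (B₀ : Set X) (δ n) ⊆ V n} ∈ I := fun B₀ =>
    hV.2.2 B₀ (hbase.1 B₀.2)
  choose δ hpos hImem using key
  set A : ↥𝔅₀ → Set ℕ := fun B₀ => {n | ¬ enl (B₀ : Set X) (δ B₀ n) ⊆ V n} with hA
  have hsub : Set.range A ⊆ I := by rintro _ ⟨B₀, rfl⟩; exact hImem B₀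
  have hcardle : Cardinal.lift.{u} (Cardinal.mk ↥(Set.range A)) ≤
      Cardinal.lift.{0} (Cardinal.mk ↥𝔅₀) := Cardinal.mk_range_le_lift
  obtain ⟨φ, hφ⟩ := hcard (Set.range A) hsub hcardle
  refine ⟨φ, fun m => hV.1 (φ m), ?_, ?_⟩
  · -- prove cover using the third condition proved inline
    have third : ∀ B ∈ 𝔅, ∃ δ' : ℕ → ℝ, (∀ n, 0 < δ' n) ∧
        {m | ¬ enl B (δ' m) ⊆ V (φ m)} ∈ J := by
      intro B hBmem
      obtain ⟨B₀, hB₀, hBB₀⟩ := hbase.2 B hBmem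
      refine ⟨fun m => δ ⟨B₀, hB₀⟩ (φ m), fun m => hpos _ _, ?_⟩
      have hJ' : φ ⁻¹' (A ⟨B₀, hB₀⟩) ∈ J := hφ _ ⟨_, rfl⟩
      refine hJ.1 _ hJ' _ ?_
      intro m hm
      simp only [Set.mem_setOf_eq, Set.mem_preimage, hA] at *
      intro hcon
      exact hm (subset_trans (by
        apply Set.iUnion₂_mono' 
        intro x hx
        exact ⟨x, hBB₀ hx, subset_rfl⟩) hcon)
    ext x
    simp only [Set.mem_iUnion, Set.mem_univ, iff_true]
    have hx : {x} ∈ 𝔅 := by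
      obtain ⟨B, hBmem, hxB⟩ := hB.2.2 x
      exact hB.1 B hBmem {x} (by simpa using hxB)
    obtain ⟨δ', hδ'pos, hJmem⟩ := third {x} hx
    have hne : {m | ¬ enl ({x} : Set X) (δ' m) ⊆ V (φ m)} ≠ Set.univ := by
      intro h; exact hJ.2.2.2 (h ▸ hJmem)
    obtain ⟨m, hm⟩ : ∃ m, enl ({x} : Set X) (δ' m) ⊆ V (φ m) := by
      by_contra h
      push_neg at h
      exact hne (Set.eq_univ_of_forall fun m => h m)
    refine ⟨m, hm ?_⟩
    simp only [enl, Set.mem_singleton_iff, Set.iUnion_iUnion_eq_left]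
    exact Metric.mem_ball_self (hδ'pos m)
  · intro B hBmem
    obtain ⟨B₀, hB₀, hBB₀⟩ := hbase.2 B hBmem
    refine ⟨fun m => δ ⟨B₀, hB₀⟩ (φ m), fun m => hpos _ _, ?_⟩
    have hJ' : φ ⁻¹' (A ⟨B₀, hB₀⟩) ∈ J := hφ _ ⟨_, rfl⟩
    refine hJ.1 _ hJ' _ ?_
    intro m hm
    simp only [Set.mem_setOf_eq, Set.mem_preimage, hA] at *
    intro hcon
    exact hm (subset_trans (by
      apply Set.iUnion₂_mono'
      intro x hx
      exact ⟨x, hBB₀ hx, subset_rfl⟩) hcon)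
end

section
/- Let 𝔅 be a bornology on a metric space X with closed base 𝔅₀, and let ℐ be an ideal on ω. Suppose every family F ⊆ ω^ω of functions with |F| ≤ |𝔅₀| is ℐ-bounded, i.e., there is g ∈ ω^ω with {n : g(n) < f(n)} ∈ ℐ for every f ∈ F. Then X satisfies S1(Γ_{𝔅ˢ}, ℐ-Γ_{𝔅ˢ}): for every sequence {𝒰_n : n ∈ ω} of γ_{𝔅ˢ}-covers 𝒰_n = {U_{n,m} : m ∈ ω} there is a choice m ↦ g(n) such that {U_{n,g(n)} : n ∈ ω} is an ℐ-γ_{𝔅ˢ}-cover of X. -/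
open Set

universe u

theorem s1_gamma_igamma_of_bounded {X : Type u} [MetricSpace X]
    (𝔅 𝔅₀ : Set (Set X)) (hB : IsBornology 𝔅) (hbase : IsBase 𝔅 𝔅₀)
    (hclosed : ∀ B ∈ 𝔅₀, IsClosed B)
    (I : Set (Set ℕ)) (hI : IsIdeal I)
    (hbd : ∀ F : Set (ℕ → ℕ), Cardinal.lift.{u} (Cardinal.mk ↥F) ≤ Cardinal.lift.{0} (Cardinal.mk ↥𝔅₀) →
      ∃ g : ℕ → ℕ, ∀ f ∈ F, {n : ℕ | g n < f n} ∈ I) :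
    ∀ U : ℕ → ℕ → Set X, (∀ n, GammaCover 𝔅 (U n)) →
      ∃ g : ℕ → ℕ, IGammaCover 𝔅 I (fun n => U n (g n)) := by

  intro U hU
  classical
  have key : ∀ B₀ ∈ 𝔅₀, ∀ n : ℕ, ∃ n₀ : ℕ, ∃ δ : ℕ → ℝ,
      ∀ m ≥ n₀, 0 < δ m ∧ enl B₀ (δ m) ⊆ U n m := by
    intro B₀ hB₀ n
    exact (hU n).2.2 B₀ (hbase.1 hB₀)
  choose! f δf hf using key
  obtain ⟨g, hg⟩ := hbd (f '' 𝔅₀) Cardinal.mk_image_le_lift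
  refine ⟨g, fun n => (hU n).1 (g n), ?_, ?_⟩
  · ext x
    simp only [Set.mem_iUnion, Set.mem_univ, iff_true]
    obtain ⟨B, hBmem, hxB⟩ := hB.2.2 x
    obtain ⟨B₀, hB₀, hBB₀⟩ := hbase.2 B hBmem
    have hIm : {n | g n < f B₀ n} ∈ I := hg _ ⟨B₀, hB₀, rfl⟩
    have : {n | g n < f B₀ n} ≠ Set.univ := by
      intro h; exact hI.2.2.2 (h ▸ hIm)
    obtain ⟨n, hn⟩ : ∃ n, ¬ g n < f B₀ n := by
      by_contra hc
      push_neg at hc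
      exact this (Set.eq_univ_of_forall hc)
    have hn' : f B₀ n ≤ g n := le_of_not_gt hn
    obtain ⟨hδpos, hδsub⟩ := hf B₀ hB₀ n (g n) hn'
    refine ⟨n, hδsub ?_⟩
    exact Set.mem_biUnion (hBB₀ hxB) (Metric.mem_ball_self hδpos)
  · intro B hBmem
    obtain ⟨B₀, hB₀, hBB₀⟩ := hbase.2 B hBmem
    have hIm : {n | g n < f B₀ n} ∈ I := hg _ ⟨B₀, hB₀, rfl⟩
    refine ⟨fun n => if f B₀ n ≤ g n then δf B₀ n (g n) else 1, fun n => ?_, ?_⟩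
    · by_cases h : f B₀ n ≤ g n
      · simpa [h] using (hf B₀ hB₀ n (g n) h).1
      · simp [h]
    · apply hI.1 _ hIm
      intro n hn
      simp only [Set.mem_setOf_eq] at hn ⊢
      by_contra hc
      push_neg at hc
      apply hn
      rw [if_pos hc]
      have hsub : enl B (δf B₀ n (g n)) ⊆ enl B₀ (δf B₀ n (g n)) := by
        apply Set.biUnion_subset_biUnion_left hBB₀
      exact hsub.trans (hf B₀ hB₀ n (g n) hc).2
end

section
/- Let 𝔅 be a bornology on a metric space X with closed base and let ℐ be an ideal on ω that is not tall, i.e., ℐ has a pseudounion. If X satisfies S1(Γ_{𝔅ˢ}, Γ_{𝔅ˢ}), then X satisfies S1(ℐ-Γ_{𝔅ˢ}, Γ_{𝔅ˢ}). -/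
open Set

theorem s1_igamma_gamma_of_not_tall {X : Type*} [MetricSpace X] (𝔅 : Set (Set X))
    (hB : IsBornology 𝔅) (hcb : HasClosedBase 𝔅)
    (I : Set (Set ℕ)) (hI : IsIdeal I) (hpu : ∃ A, IsPseudounion I A)
    (hS1 : ∀ U : ℕ → ℕ → Set X, (∀ n, GammaCover 𝔅 (U n)) →
      ∃ g : ℕ → ℕ, GammaCover 𝔅 (fun n => U n (g n))) :
    ∀ U : ℕ → ℕ → Set X, (∀ n, IGammaCover 𝔅 I (U n)) →
      ∃ g : ℕ → ℕ, GammaCover 𝔅 (fun n => U n (g n)) := by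
  obtain ⟨A, hAc, hApu⟩ := hpu
  intro U hU
  set e : ℕ → ℕ := Nat.nth (· ∈ Aᶜ) with he
  have hem : ∀ k, e k ∉ A := fun k => Nat.nth_mem_of_infinite hAc k
  have hinj : Function.Injective e := Nat.nth_injective hAc
  have hfin : ∀ K ∈ I, {k | e k ∈ K}.Finite := by
    intro K hK
    have : {k | e k ∈ K} = e ⁻¹' (K \ A) := by
      ext k; simp only [Set.mem_setOf_eq, Set.mem_preimage, Set.mem_diff]
      exact ⟨fun h => ⟨h, hem k⟩, fun h => h.1⟩
    rw [this]
    exact Set.Finite.preimage hinj.injOn (hApu K hK)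
  have key : ∀ n, GammaCover 𝔅 (fun k => U n (e k)) := by
    intro n
    obtain ⟨hopen, hcov, hmain⟩ := hU n
    refine ⟨fun k => hopen (e k), ?_, ?_⟩
    · apply Set.eq_univ_of_forall
      intro x
      obtain ⟨B, hBm, hxB⟩ := hB.2.2 x
      obtain ⟨δ, hδ, hK⟩ := hmain B hBm
      obtain ⟨k, hk⟩ := Set.Infinite.nonempty
        ((Set.infinite_univ (α := ℕ)).diff (hfin _ hK))
      have hsub : enl B (δ (e k)) ⊆ U n (e k) := by
        by_contra h
        exact hk.2 h
      refine Set.mem_iUnion.mpr ⟨k, hsub ?_⟩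
      exact Set.mem_biUnion hxB (Metric.mem_ball_self (hδ (e k)))
    · intro B hBm
      obtain ⟨δ, hδ, hK⟩ := hmain B hBm
      obtain ⟨n₀, hn₀⟩ := (hfin _ hK).bddAbove
      refine ⟨n₀ + 1, fun k => δ (e k), fun k hk => ⟨hδ (e k), ?_⟩⟩
      by_contra h
      exact absurd (hn₀ h) (by omega)
  obtain ⟨g, hg⟩ := hS1 (fun n k => U n (e k)) key
  exact ⟨fun n => e (g n), hg⟩
end

section
/- Let 𝔅 be a bornology on a metric space X with closed base, and let ℐ be an ideal on ω with a pseudounion. If X has the ℐ-𝔅ˢ-Hurewicz property, then X has the 𝔅ˢ-Hurewicz property. -/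
open Set

theorem ihurewicz_to_hurewicz_of_pseudounion {X : Type*} [MetricSpace X]
    (𝔅 : Set (Set X)) (hB : IsBornology 𝔅) (hcb : HasClosedBase 𝔅)
    (I : Set (Set ℕ)) (hI : IsIdeal I) (hpu : ∃ A, IsPseudounion I A)
    (h : IHurewicz 𝔅 I) : BsHurewicz 𝔅 := by
  classical
  intro 𝒰 h𝒰
  obtain ⟨A, hAc, hAps⟩ := hpu
  -- intersection covers
  set 𝒲 : ℕ → Set (Set X) := fun n =>
    {S | ∃ U : ℕ → Set X, (∀ j ≤ n, U j ∈ 𝒰 j) ∧ S = ⋂ j ∈ Finset.Iic n, U j} with h𝒲def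
  have hmono : ∀ (B : Set X) (δ δ' : ℝ), δ ≤ δ' → enl B δ ⊆ enl B δ' := by
    intro B δ δ' hle
    exact Set.iUnion₂_mono fun x hx => Metric.ball_subset_ball hle
  have hmemenl : ∀ (B : Set X) (δ : ℝ), 0 < δ → B ⊆ enl B δ := by
    intro B δ hδ x hx
    exact Set.mem_biUnion hx (Metric.mem_ball_self hδ)
  have h𝒲 : ∀ n, OBsCover 𝔅 (𝒲 n) := by
    intro n
    refine ⟨?_, ?_, ?_, ?_⟩
    · rintro S ⟨U, hU, rfl⟩
      exact isOpen_biInter_finset fun j hj => (h𝒰 j).1 _ (hU j (Finset.mem_Iic.mp hj))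
    · rintro ⟨U, hU, hEq⟩
      have h0 : U 0 ∈ 𝒰 0 := hU 0 (Nat.zero_le n)
      have hsub : (Set.univ : Set X) ⊆ U 0 := by
        rw [hEq]
        exact Set.biInter_subset_of_mem (Finset.mem_Iic.mpr (Nat.zero_le n))
      have : U 0 = Set.univ := Set.eq_univ_of_univ_subset hsub
      exact (h𝒰 0).2.1 (this ▸ h0)
    · apply Set.eq_univ_of_forall
      intro x
      obtain ⟨B, hBmem, hxB⟩ := hB.2.2 x
      choose U hU δ hδ hsub using fun j => (h𝒰 j).2.2.2 B hBmem
      refine Set.mem_sUnion.mpr ⟨⋂ j ∈ Finset.Iic n, U j, ⟨U, fun j _ => hU j, rfl⟩, ?_⟩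
      exact Set.mem_biInter fun j hj => hsub j (hmemenl B (δ j) (hδ j) hxB)
    · intro B hBmem
      choose U hU δ hδ hsub using fun j => (h𝒰 j).2.2.2 B hBmem
      refine ⟨⋂ j ∈ Finset.Iic n, U j, ⟨U, fun j _ => hU j, rfl⟩,
        (Finset.Iic n).inf' ⟨n, Finset.mem_Iic.mpr le_rfl⟩ δ, ?_, ?_⟩
      · simp only [gt_iff_lt, Finset.lt_inf'_iff]
        obtain ⟨j, _, hjeq⟩ := Finset.exists_mem_eq_inf' ⟨n, Finset.mem_Iic.mpr le_rfl⟩ δ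
        rw [hjeq]
        exact hδ j
      · refine Set.subset_iInter₂ fun j hj => ?_
        exact (hmono B _ _ (Finset.inf'_le δ hj)).trans (hsub j)
  obtain ⟨W, hWsub, hWprop⟩ := h 𝒲 h𝒲
  have hsel : ∀ n S, S ∈ W n → ∃ U : ℕ → Set X,
      (∀ j ≤ n, U j ∈ 𝒰 j) ∧ S = ⋂ j ∈ Finset.Iic n, U j :=
    fun n S hS => (hWsub n).1 hS
  let sel : ℕ → Set X → ℕ → Set X := fun n S =>
    if hS : S ∈ W n then Classical.choose (hsel n S hS) else fun _ => ∅
  have hsel1 : ∀ n S, S ∈ W n → ∀ j ≤ n, sel n S j ∈ 𝒰 j := by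
    intro n S hS j hj
    simp only [sel, dif_pos hS]
    exact (Classical.choose_spec (hsel n S hS)).1 j hj
  have hsel2 : ∀ n S, S ∈ W n → ∀ j ≤ n, S ⊆ sel n S j := by
    intro n S hS j hj
    simp only [sel, dif_pos hS]
    conv_lhs => rw [(Classical.choose_spec (hsel n S hS)).2]
    exact Set.biInter_subset_of_mem (Finset.mem_Iic.mpr hj)
  -- choose an index in Aᶜ above each m
  choose f hfA hfm using fun m => hAc.exists_gt m
  refine ⟨fun m => (fun S => sel (f m) S m) '' (W (f m)), ?_, ?_⟩
  · intro m
    constructor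
    · rintro _ ⟨S, hS, rfl⟩
      exact hsel1 (f m) S hS m (hfm m).le
    · exact ((hWsub (f m)).2).image _
  · intro B hBmem
    obtain ⟨δ, hδpos, hK⟩ := hWprop B hBmem
    have hfin : ({n | ∀ U ∈ W n, ¬ enl B (δ n) ⊆ U} \ A).Finite := hAps _ hK
    obtain ⟨N, hN⟩ := hfin.bddAbove
    refine ⟨N + 1, fun m => δ (f m), ?_⟩
    intro n hn
    refine ⟨hδpos (f n), ?_⟩
    have hknA : f n ∉ A := hfA n
    have hknK : f n ∉ {n | ∀ U ∈ W n, ¬ enl B (δ n) ⊆ U} := by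
      intro hk
      have h1 : f n ≤ N := hN ⟨hk, hknA⟩
      have h2 := hfm n
      omega
    simp only [Set.mem_setOf_eq] at hknK
    push_neg at hknK
    obtain ⟨S, hS, hSsub⟩ := hknK
    exact ⟨sel (f n) S n, ⟨S, hS, rfl⟩, hSsub.trans (hsel2 (f n) S hS n (hfm n).le)⟩
end

section
/- Let 𝔅 be a bornology on a metric space X with closed base 𝔅₀, and let ℐ be an ideal on ω. Assume X is 𝔅ˢ-Lindelöf and that every family of functions ω → ω of cardinality at most |𝔅₀| is ℐ-bounded (|𝔅₀| < 𝔟_ℐ). Then X has the ℐ-𝔅ˢ-Hurewicz property. -/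
open Set

universe u

theorem ihurewicz_of_bounding {X : Type u} [MetricSpace X]
    (𝔅 𝔅₀ : Set (Set X)) (hB : IsBornology 𝔅) (hbase : IsBase 𝔅 𝔅₀)
    (hclosed : ∀ B ∈ 𝔅₀, IsClosed B)
    (I : Set (Set ℕ)) (hI : IsIdeal I)
    (hLin : ∀ 𝒰 : Set (Set X), OBsCover 𝔅 𝒰 →
      ∃ 𝒱 ⊆ 𝒰, 𝒱.Countable ∧ OBsCover 𝔅 𝒱)
    (hbd : ∀ F : Set (ℕ → ℕ), Cardinal.lift.{u} (Cardinal.mk ↥F) ≤ Cardinal.lift.{0} (Cardinal.mk ↥𝔅₀) →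
      ∃ g : ℕ → ℕ, ∀ f ∈ F, {n : ℕ | g n < f n} ∈ I) :
    IHurewicz 𝔅 I := by
  intro 𝒰 h𝒰
  by_cases h𝔅 : 𝔅.Nonempty
  swap
  · exact ⟨fun _ => ∅, fun n => ⟨Set.empty_subset _, Set.finite_empty⟩,
      fun B hB => absurd ⟨B, hB⟩ h𝔅⟩
  obtain ⟨Bs, hBs⟩ := h𝔅
  have hV : ∀ n, ∃ 𝒱 ⊆ 𝒰 n, 𝒱.Countable ∧ OBsCover 𝔅 𝒱 := fun n => hLin (𝒰 n) (h𝒰 n)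
  choose 𝒱 hsub hcnt hcov using hV
  have hne : ∀ n, (𝒱 n).Nonempty := fun n => by
    obtain ⟨U, hU, -⟩ := (hcov n).2.2.2 Bs hBs
    exact ⟨U, hU⟩
  choose e he using fun n => (hcnt n).exists_eq_range (hne n)
  have hm : ∀ (b : ↥𝔅₀) (n : ℕ), ∃ m, ∃ δ > (0:ℝ), enl (b : Set X) δ ⊆ e n m := by
    intro b n
    obtain ⟨U, hU, δ, hδ, hsubU⟩ := (hcov n).2.2.2 b (hbase.1 b.2)
    rw [he n] at hU
    obtain ⟨m, rfl⟩ := hU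
    exact ⟨m, δ, hδ, hsubU⟩
  choose f δf hδpos hδsub using hm
  obtain ⟨g, hg⟩ := hbd (Set.range f) Cardinal.mk_range_le_lift
  refine ⟨fun n => e n '' Set.Iic (g n), fun n => ⟨?_, (Set.finite_Iic _).image _⟩, ?_⟩
  · rintro U ⟨m, -, rfl⟩
    exact hsub n (by rw [he n]; exact ⟨m, rfl⟩)
  · intro B hB
    obtain ⟨B₀, hB₀, hBB₀⟩ := hbase.2 B hB
    set b : ↥𝔅₀ := ⟨B₀, hB₀⟩
    refine ⟨δf b, hδpos b, hI.1 _ (hg (f b) ⟨b, rfl⟩) _ ?_⟩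
    intro n hn
    simp only [Set.mem_setOf_eq] at hn ⊢
    by_contra hle
    push_neg at hle
    refine hn (e n (f b n)) ⟨f b n, hle, rfl⟩ fun x hx => hδsub b n ?_
    obtain ⟨y, hy, hxy⟩ := Set.mem_iUnion₂.1 hx
    exact Set.mem_iUnion₂.2 ⟨y, hBB₀ hy, hxy⟩
end
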